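/- Let E ⊆ ℝ² be bounded with upper Minkowski dimension strictly greater than 1. Then the set of slopes of nonvertical lines connecting pairs of distinct points of E, namely {(b₂−a₂)/(b₁−a₁) : (a₁,a₂),(b₁,b₂) ∈ E, a₁ ≠ b₁}, is dense in ℝ. -/

import Mathlib

open Set Filter Bornology Metric

/-- Minimal number of closed balls of radius `r` needed to cover `E`. -/
noncomputable def coverNum {X : Type*} [PseudoMetricSpace X] (E : Set X) (r : ℝ) : ℕ :=
  sInf {n : ℕ | ∃ s : Finset X, s.card = n ∧ E ⊆ ⋃ x ∈ s, Metric.closedBall x r}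

/-- Upper Minkowski (box-counting) dimension:
`limsup_{r → 0⁺} log N(E,r) / log (1/r)`. -/
noncomputable def udim {X : Type*} [PseudoMetricSpace X] (E : Set X) : ℝ :=
  Filter.limsup (fun r : ℝ => Real.log (coverNum E r) / Real.log (1 / r))
    (nhdsWithin 0 (Set.Ioi 0))

theorem stmt6 (E : Set ℂ) (hE : IsBounded E) (hdim : udim E > 1) :
    Dense {s : ℝ | ∃ a ∈ E, ∃ b ∈ E, a.re ≠ b.re ∧ s = (b.im - a.im) / (b.re - a.re)} := by
  by_contra hnd
  rw [Metric.dense_iff] at hnd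
  push_neg at hnd
  obtain ⟨s, ε, hε, hball⟩ := hnd
  -- separation of slopes from s
  have hsep : ∀ a ∈ E, ∀ b ∈ E, a.re ≠ b.re →
      ε ≤ |(b.im - a.im) / (b.re - a.re) - s| := by
    intro a ha b hb hab
    by_contra h
    push_neg at h
    have : (b.im - a.im) / (b.re - a.re) ∈ Metric.ball s ε ∩
        {s : ℝ | ∃ a ∈ E, ∃ b ∈ E, a.re ≠ b.re ∧ s = (b.im - a.im) / (b.re - a.re)} := by
      constructor
      · rw [Metric.mem_ball, Real.dist_eq]; exact h
      · exact ⟨a, ha, b, hb, hab, rfl⟩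
    rw [hball] at this
    exact this
  set φ : ℂ → ℝ := fun z => z.im - s * z.re with hφ
  set K : ℝ := 1 + (1 + |s|) / ε with hK
  have hK1 : (1 : ℝ) ≤ K := by
    have : 0 ≤ (1 + |s|) / ε := by positivity
    rw [hK]; linarith
  have hKpos : (0 : ℝ) < K := lt_of_lt_of_le one_pos hK1
  -- key Lipschitz-type estimate
  have hKdist : ∀ a ∈ E, ∀ b ∈ E, dist a b ≤ K * |φ b - φ a| := by
    intro a ha b hb
    set u : ℝ := b.re - a.re with hu
    set v : ℝ := b.im - a.im with hv
    have hw : φ b - φ a = v - s * u := by simp only [hφ, hu, hv]; ring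
    have hdab : dist a b ≤ |u| + |v| := by
      have h1 := Complex.norm_le_abs_re_add_abs_im (a - b)
      rw [Complex.dist_eq]
      simp only [Complex.sub_re, Complex.sub_im] at h1
      calc ‖a - b‖ ≤ |a.re - b.re| + |a.im - b.im| := h1
        _ = |u| + |v| := by rw [abs_sub_comm a.re, abs_sub_comm a.im]
    rw [hw]
    rcases eq_or_ne u 0 with h0 | h0
    · have : |v - s * u| = |v| := by rw [h0]; ring_nf
      rw [this]
      calc dist a b ≤ |u| + |v| := hdab
        _ = |v| := by rw [h0, abs_zero, zero_add]
        _ ≤ K * |v| := le_mul_of_one_le_left (abs_nonneg _) hK1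
    · have hslope : ε ≤ |v / u - s| := hsep a ha b hb (fun h => h0 (by rw [hu, h, sub_self]))
      have h1 : |u| * ε ≤ |v - s * u| := by
        have heq : v - s * u = u * (v / u - s) := by field_simp
        rw [heq, abs_mul]
        exact mul_le_mul_of_nonneg_left hslope (abs_nonneg _)
      have h2 : |v| ≤ |v - s * u| + |s| * |u| := by
        calc |v| = |(v - s * u) + s * u| := by ring_nf
          _ ≤ |v - s * u| + |s * u| := abs_add_le _ _
          _ = |v - s * u| + |s| * |u| := by rw [abs_mul]
      have hKe : K * ε = ε + 1 + |s| := by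
        rw [hK]; field_simp; ring
      have hgoal : (|u| + |v|) * ε ≤ (K * |v - s * u|) * ε := by
        have hw0 : 0 ≤ |v - s * u| := abs_nonneg _
        have hs0 : 0 ≤ |s| := abs_nonneg _
        have : (K * |v - s * u|) * ε = (ε + 1 + |s|) * |v - s * u| := by
          rw [mul_right_comm, hKe]
        rw [this]
        nlinarith [abs_nonneg u, abs_nonneg v]
      have := le_of_mul_le_mul_right hgoal hε
      linarith [hdab]
  -- a bound M on |φ| over E
  obtain ⟨R, hR⟩ := hE.subset_closedBall 0
  set R' : ℝ := max R 0 with hR'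
  have hR'0 : 0 ≤ R' := le_max_right _ _
  set M : ℝ := (1 + |s|) * R' with hM
  have hM0 : 0 ≤ M := by positivity
  have hφM : ∀ z ∈ E, |φ z| ≤ M := by
    intro z hz
    have hzR : ‖z‖ ≤ R' := by
      have := hR hz
      rw [Metric.mem_closedBall, Complex.dist_eq, sub_zero] at this
      exact le_trans this (le_max_left _ _)
    have h1 : |z.im| ≤ R' := le_trans (Complex.abs_im_le_norm z) hzR
    have h2 : |z.re| ≤ R' := le_trans (Complex.abs_re_le_norm z) hzR
    calc |φ z| ≤ |z.im| + |s * z.re| := abs_sub _ _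
      _ = |z.im| + |s| * |z.re| := by rw [abs_mul]
      _ ≤ R' + |s| * R' := by
          have := mul_le_mul_of_nonneg_left h2 (abs_nonneg s)
          linarith
      _ = M := by rw [hM]; ring
  -- covering bound
  have key : ∀ r : ℝ, 0 < r → (coverNum E r : ℝ) ≤ 2 * M * K / r + 1 := by
    intro r hr
    set N : ℕ := ⌊2 * M * K / r⌋₊ with hN
    set idx : ℂ → ℕ := fun z => ⌊(φ z + M) * (K / r)⌋₊ with hidx
    classical
    set c : ℕ → ℂ := fun j =>
      if h : (E ∩ idx ⁻¹' {j}).Nonempty then h.choose else 0 with hc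
    set T : Finset ℂ := (Finset.range (N + 1)).image c with hT
    have hcover : E ⊆ ⋃ x ∈ T, Metric.closedBall x r := by
      intro z hz
      set j : ℕ := idx z with hj
      have hjN : j ≤ N := by
        apply Nat.floor_le_floor
        have h1 : φ z + M ≤ 2 * M := by
          have := (abs_le.mp (hφM z hz)).2; linarith
        have h2 : (0:ℝ) ≤ K / r := by positivity
        calc (φ z + M) * (K / r) ≤ 2 * M * (K / r) :=
              mul_le_mul_of_nonneg_right h1 h2
          _ = 2 * M * K / r := by ring
      have hne : (E ∩ idx ⁻¹' {j}).Nonempty := ⟨z, hz, rfl⟩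
      have hcj : c j = hne.choose := by rw [hc]; simp [hne]
      obtain ⟨hcjE, hcjidx⟩ := hne.choose_spec
      have hcjE' : c j ∈ E := by rw [hcj]; exact hcjE
      have hcjidx' : idx (c j) = j := by rw [hcj]; exact hcjidx
      -- distance estimate
      have hdist : dist z (c j) ≤ r := by
        have hzpos : 0 ≤ (φ z + M) * (K / r) := by
          have := (abs_le.mp (hφM z hz)).1
          have h2 : (0:ℝ) ≤ K / r := by positivity
          apply mul_nonneg _ h2; linarith
        have hcpos : 0 ≤ (φ (c j) + M) * (K / r) := by
          have := (abs_le.mp (hφM _ hcjE')).1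
          have h2 : (0:ℝ) ≤ K / r := by positivity
          apply mul_nonneg _ h2; linarith
        have hfloor : ⌊(φ z + M) * (K / r)⌋₊ = ⌊(φ (c j) + M) * (K / r)⌋₊ := by
          show idx z = idx (c j)
          rw [hcjidx']
        have habs : |(φ z + M) * (K / r) - (φ (c j) + M) * (K / r)| < 1 := by
          set x := (φ z + M) * (K / r)
          set y := (φ (c j) + M) * (K / r)
          have hx1 : (⌊x⌋₊ : ℝ) ≤ x := Nat.floor_le hzpos
          have hx2 : x < ⌊x⌋₊ + 1 := Nat.lt_floor_add_one x
          have hy1 : (⌊y⌋₊ : ℝ) ≤ y := Nat.floor_le hcpos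
          have hy2 : y < ⌊y⌋₊ + 1 := Nat.lt_floor_add_one y
          rw [abs_lt]
          constructor <;> [nlinarith [hfloor ▸ hx1]; nlinarith [hfloor ▸ hy1]]
        have habs' : |φ z - φ (c j)| * (K / r) < 1 := by
          have : (φ z + M) * (K / r) - (φ (c j) + M) * (K / r)
              = (φ z - φ (c j)) * (K / r) := by ring
          rw [this, abs_mul, abs_of_nonneg (by positivity : (0:ℝ) ≤ K / r)] at habs
          exact habs
        have hphi : |φ z - φ (c j)| ≤ r / K := by
          have hKr : (0:ℝ) < K / r := by positivity
          have h1 : |φ z - φ (c j)| ≤ 1 / (K / r) :=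
            (le_div_iff₀ hKr).mpr habs'.le
          rwa [one_div_div] at h1
        calc dist z (c j) ≤ K * |φ z - φ (c j)| := by
              have := hKdist (c j) hcjE' z hz
              rwa [dist_comm] at this
          _ ≤ K * (r / K) := mul_le_mul_of_nonneg_left hphi (le_of_lt hKpos)
          _ = r := by field_simp
      have hcT : c j ∈ T := by
        rw [hT]
        exact Finset.mem_image.mpr ⟨j, Finset.mem_range.mpr (Nat.lt_succ_of_le hjN), rfl⟩
      exact Set.mem_biUnion hcT (Metric.mem_closedBall.mpr hdist)
    have h1 : coverNum E r ≤ T.card := Nat.sInf_le ⟨T, rfl, hcover⟩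
    have h2 : T.card ≤ N + 1 := le_trans (Finset.card_image_le) (by simp)
    have h3 : (N : ℝ) ≤ 2 * M * K / r := Nat.floor_le (by positivity)
    calc (coverNum E r : ℝ) ≤ (N : ℝ) + 1 := by
          exact_mod_cast le_trans h1 h2
      _ ≤ 2 * M * K / r + 1 := by linarith
  -- conclude udim E ≤ 1
  set C : ℝ := 2 * M * K + 1 with hC
  have hC1 : 1 ≤ C := by nlinarith [hM0, hKpos]
  have hub : udim E ≤ 1 := by
    apply le_of_forall_pos_le_add
    intro δ hδ
    rw [udim]
    have hcb : IsCoboundedUnder (· ≤ ·) (nhdsWithin (0:ℝ) (Set.Ioi 0))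
        (fun r : ℝ => Real.log (coverNum E r) / Real.log (1 / r)) := by
      apply Filter.isCoboundedUnder_le_of_eventually_le (nhdsWithin (0:ℝ) (Set.Ioi 0)) (x := 0)
      filter_upwards [Ioo_mem_nhdsGT_of_mem (Set.mem_Ico.mpr ⟨le_refl (0:ℝ), one_pos⟩)]
        with r hr
      have hr1 : (1:ℝ) < 1 / r := one_lt_one_div hr.1 hr.2
      exact div_nonneg (Real.log_natCast_nonneg _) (le_of_lt (Real.log_pos hr1))
    apply Filter.limsup_le_of_le hcb
    set r₀ : ℝ := min (1/2) (Real.exp (-(Real.log C) / δ)) with hr₀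
    have hr₀pos : 0 < r₀ := lt_min (by norm_num) (Real.exp_pos _)
    filter_upwards [Ioo_mem_nhdsGT_of_mem (Set.mem_Ico.mpr ⟨le_refl (0:ℝ), hr₀pos⟩)]
      with r hr
    obtain ⟨hrpos, hrlt⟩ := hr
    have hrhalf : r < 1/2 := lt_of_lt_of_le hrlt (min_le_left _ _)
    have hr1 : r < 1 := by linarith
    have hL : 0 < Real.log (1 / r) :=
      Real.log_pos (one_lt_one_div hrpos hr1)
    set L : ℝ := Real.log (1 / r) with hLdef
    -- L ≥ log C / δ
    have hLC : Real.log C / δ ≤ L := by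
      have hre : r ≤ Real.exp (-(Real.log C) / δ) :=
        le_of_lt (lt_of_lt_of_le hrlt (min_le_right _ _))
      have : Real.log r ≤ -(Real.log C) / δ := by
        calc Real.log r ≤ Real.log (Real.exp (-(Real.log C) / δ)) :=
              Real.log_le_log hrpos hre
          _ = -(Real.log C) / δ := Real.log_exp _
      rw [hLdef, one_div, Real.log_inv]
      have h' : -Real.log C / δ = -(Real.log C / δ) := by ring
      rw [h'] at this
      linarith
    -- coverNum bound
    have hN : (coverNum E r : ℝ) ≤ C / r := by
      have h1 := key r hrpos
      have h2 : (1:ℝ) ≤ 1 / r := le_of_lt (one_lt_one_div hrpos hr1)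
      calc (coverNum E r : ℝ) ≤ 2 * M * K / r + 1 := h1
        _ ≤ 2 * M * K / r + 1 / r := by linarith
        _ = C / r := by rw [hC]; ring
    have hCr1 : 1 ≤ C / r := by
      calc (1:ℝ) ≤ C := hC1
        _ ≤ C / r := by
            rw [le_div_iff₀ hrpos]
            nlinarith [hC1]
    have hlogN : Real.log (coverNum E r) ≤ Real.log C + L := by
      have hlog : Real.log (coverNum E r) ≤ Real.log (C / r) := by
        rcases Nat.eq_zero_or_pos (coverNum E r) with h0 | h0
        · rw [h0]; simp
          exact Real.log_nonneg hCr1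
        · exact Real.log_le_log (by exact_mod_cast h0) hN
      calc Real.log (coverNum E r) ≤ Real.log (C / r) := hlog
        _ = Real.log C - Real.log r := Real.log_div (by linarith) (ne_of_gt hrpos)
        _ = Real.log C + L := by rw [hLdef, one_div, Real.log_inv]; ring
    have hlogC0 : 0 ≤ Real.log C := Real.log_nonneg hC1
    have hLpos : 0 < L := hL
    calc Real.log (coverNum E r) / L ≤ (Real.log C + L) / L :=
          (div_le_div_iff_of_pos_right hLpos).mpr hlogN
      _ = Real.log C / L + 1 := by field_simp
      _ ≤ δ + 1 := by
          have : Real.log C / L ≤ δ := by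
            rw [div_le_iff₀ hLpos]
            have := mul_le_mul_of_nonneg_left hLC (le_of_lt hδ)
            rw [mul_div_cancel₀ _ (ne_of_gt hδ)] at this
            linarith
          linarith
      _ = 1 + δ := by ring
  linarith
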